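/- Let φ be C² with φ(1)+φ(2)=0. Then E^a : ℓ¹(ℕ) → ℝ, E^a(u) = Σ_{ℓ≥0}[φ(1+u_ℓ) + φ(2+u_ℓ+u_{ℓ+1})], is Fréchet differentiable at 0 with derivative ⟨δE^a(0), v⟩ = Σ_{ℓ≥0}[φ'(1)v_ℓ + φ'(2)(v_ℓ+v_{ℓ+1})]. -/

import Mathlib

open Set in
lemma taylor_bound (φ : ℝ → ℝ) (hφ : ContDiff ℝ 2 φ) (C : ℝ)
    (hC : ∀ x ∈ Set.Icc (-1:ℝ) 5, |deriv (deriv φ) x| ≤ C)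
    (a t : ℝ) (ha1 : 1 ≤ a) (ha2 : a ≤ 2) (ht : |t| ≤ 2) :
    |φ (a + t) - φ a - deriv φ a * t| ≤ C * t ^ 2 := by
  have hC0 : 0 ≤ C := le_trans (abs_nonneg _) (hC 1 ⟨by norm_num, by norm_num⟩)
  have hd1 : Differentiable ℝ φ := hφ.differentiable (by norm_num)
  have hd2 : Differentiable ℝ (deriv φ) := by
    have h2 : ContDiff ℝ (1 + 1 : ℕ∞) φ := by exact_mod_cast hφ
    exact (((contDiff_succ_iff_deriv (n := 1)).mp (by rw [one_add_one_eq_two]; exact hφ)).2.2).differentiable (by norm_num)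
  -- Lipschitz bound for deriv φ on Icc (-1) 5
  have lip : ∀ x ∈ Icc (-1:ℝ) 5, ∀ y ∈ Icc (-1:ℝ) 5,
      |deriv φ y - deriv φ x| ≤ C * |y - x| := by
    intro x hx y hy
    have := (convex_Icc (-1:ℝ) 5).norm_image_sub_le_of_norm_hasDerivWithin_le
      (f := deriv φ) (f' := deriv (deriv φ))
      (fun z hz => (hd2 z).hasDerivAt.hasDerivWithinAt)
      (fun z hz => by simpa [Real.norm_eq_abs] using hC z hz) hx hy
    simpa [Real.norm_eq_abs] using this
  -- the function g
  set g : ℝ → ℝ := fun s => φ (a + s) - deriv φ a * s with hg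
  have habs : ∀ s ∈ uIcc (0:ℝ) t, |s| ≤ |t| := by
    intro s hs
    rw [Set.mem_uIcc] at hs
    rcases hs with ⟨h1, h2⟩ | ⟨h1, h2⟩
    · exact abs_le.2 ⟨by linarith [abs_nonneg t], le_trans h2 (le_abs_self t)⟩
    · exact abs_le.2 ⟨by linarith [neg_abs_le t], by linarith [abs_nonneg t]⟩
  have hgd : ∀ s ∈ uIcc (0:ℝ) t,
      HasDerivWithinAt g (deriv φ (a + s) - deriv φ a) (uIcc (0:ℝ) t) s := by
    intro s hs
    have h1 : HasDerivAt (fun s => φ (a + s)) (deriv φ (a + s) * 1) s :=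
      (hd1 (a + s)).hasDerivAt.comp s ((hasDerivAt_id s).const_add a)
    have h2 : HasDerivAt (fun s => deriv φ a * s) (deriv φ a * 1) s :=
      (hasDerivAt_id s).const_mul (deriv φ a)
    have h3 := (h1.sub h2).hasDerivWithinAt (s := uIcc (0:ℝ) t)
    rw [mul_one, mul_one] at h3
    exact h3
  have bound : ∀ s ∈ uIcc (0:ℝ) t, ‖deriv φ (a + s) - deriv φ a‖ ≤ C * |t| := by
    intro s hs
    have hsle := habs s hs
    have hmem : a + s ∈ Icc (-1:ℝ) 5 := by
      have := abs_le.1 (le_trans hsle ht); constructor <;> linarith [this.1, this.2]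
    have hmema : a ∈ Icc (-1:ℝ) 5 := ⟨by linarith, by linarith⟩
    have := lip a hmema (a + s) hmem
    rw [Real.norm_eq_abs]
    calc |deriv φ (a + s) - deriv φ a| ≤ C * |a + s - a| := this
      _ = C * |s| := by ring_nf
      _ ≤ C * |t| := by exact mul_le_mul_of_nonneg_left hsle hC0
  have key := (convex_uIcc (0:ℝ) t).norm_image_sub_le_of_norm_hasDerivWithin_le
    hgd bound Set.left_mem_uIcc Set.right_mem_uIcc
  have : g t - g 0 = φ (a + t) - φ a - deriv φ a * t := by simp only [hg]; ring_nf
  rw [this] at key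
  calc |φ (a + t) - φ a - deriv φ a * t| ≤ C * |t| * ‖t - 0‖ := key
    _ = C * t ^ 2 := by rw [Real.norm_eq_abs, sub_zero, mul_assoc, ← abs_mul, abs_mul_self]; ring_nf

noncomputable abbrev E1 := lp (fun _ : ℕ => ℝ) 1

lemma lp_summable_abs (v : E1) : Summable fun ℓ => |v ℓ| := by
  have := (lp.memℓp v).summable (p := 1) (by norm_num)
  simpa [Real.rpow_one, Real.norm_eq_abs] using this

lemma lp_norm_eq (v : E1) : ‖v‖ = ∑' ℓ, |v ℓ| := by
  have := lp.norm_eq_tsum_rpow (p := 1) (by norm_num) v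
  simpa [Real.rpow_one, Real.norm_eq_abs] using this

lemma lp_summable (v : E1) : Summable fun ℓ => v ℓ := (lp_summable_abs v).of_abs

lemma lp_summable_abs_shift (v : E1) : Summable fun ℓ => |v (ℓ + 1)| :=
  (summable_nat_add_iff 1).2 (lp_summable_abs v)

lemma lp_summable_shift (v : E1) : Summable fun ℓ => v (ℓ + 1) :=
  (lp_summable_abs_shift v).of_abs

lemma lp_tsum_abs_shift_le (v : E1) : ∑' ℓ, |v (ℓ + 1)| ≤ ‖v‖ := by
  rw [lp_norm_eq, Summable.tsum_eq_zero_add (lp_summable_abs v)]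
  exact le_add_of_nonneg_left (abs_nonneg _)

lemma lp_coord_le (v : E1) (ℓ : ℕ) : |v ℓ| ≤ ‖v‖ := by
  simpa [Real.norm_eq_abs] using lp.norm_apply_le_norm (p := 1) one_ne_zero v ℓ

lemma term_summable (c1 c2 : ℝ) (v : E1) :
    Summable fun ℓ => c1 * v ℓ + c2 * (v ℓ + v (ℓ + 1)) :=
  ((lp_summable v).mul_left c1).add (((lp_summable v).add (lp_summable_shift v)).mul_left c2)

set_option maxHeartbeats 1000000 in
noncomputable def Lmap (c1 c2 : ℝ) : E1 →L[ℝ] ℝ :=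
  LinearMap.mkContinuous
    { toFun := fun v => ∑' ℓ, (c1 * v ℓ + c2 * (v ℓ + v (ℓ + 1)))
      map_add' := by
        intro u v
        have : ∀ ℓ : ℕ, c1 * (u + v) ℓ + c2 * ((u + v) ℓ + (u + v) (ℓ + 1)) =
            (c1 * u ℓ + c2 * (u ℓ + u (ℓ + 1))) + (c1 * v ℓ + c2 * (v ℓ + v (ℓ + 1))) := by
          intro ℓ
          simp only [lp.coeFn_add, Pi.add_apply]
          ring
        simp only [this]
        exact Summable.tsum_add (term_summable c1 c2 u) (term_summable c1 c2 v)
      map_smul' := by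
        intro c v
        have : ∀ ℓ : ℕ, c1 * (c • v) ℓ + c2 * ((c • v) ℓ + (c • v) (ℓ + 1)) =
            c * (c1 * v ℓ + c2 * (v ℓ + v (ℓ + 1))) := by
          intro ℓ
          simp only [lp.coeFn_smul, Pi.smul_apply, smul_eq_mul]
          ring
        simp only [this, RingHom.id_apply, smul_eq_mul]
        exact tsum_mul_left }
    (|c1| + 2 * |c2|)
    (by
      intro v
      simp only [LinearMap.coe_mk, AddHom.coe_mk, Real.norm_eq_abs]
      have habs : Summable fun ℓ => |c1 * v ℓ + c2 * (v ℓ + v (ℓ + 1))| :=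
        (term_summable c1 c2 v).abs
      have hb : Summable fun ℓ => (|c1| + |c2|) * |v ℓ| + |c2| * |v (ℓ + 1)| :=
        ((lp_summable_abs v).mul_left _).add ((lp_summable_abs_shift v).mul_left _)
      calc |∑' ℓ, (c1 * v ℓ + c2 * (v ℓ + v (ℓ + 1)))|
          ≤ ∑' ℓ, |c1 * v ℓ + c2 * (v ℓ + v (ℓ + 1))| := by
            have h := norm_tsum_le_tsum_norm (f := fun ℓ => c1 * v ℓ + c2 * (v ℓ + v (ℓ + 1)))
              (by simpa only [Real.norm_eq_abs] using habs)
            simpa only [Real.norm_eq_abs] using h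
        _ ≤ ∑' ℓ, ((|c1| + |c2|) * |v ℓ| + |c2| * |v (ℓ + 1)|) := by
            refine Summable.tsum_le_tsum (fun ℓ => ?_) habs hb
            calc |c1 * v ℓ + c2 * (v ℓ + v (ℓ + 1))|
                ≤ |c1 * v ℓ| + |c2 * (v ℓ + v (ℓ + 1))| := abs_add_le _ _
              _ ≤ |c1| * |v ℓ| + |c2| * (|v ℓ| + |v (ℓ + 1)|) := by
                  rw [abs_mul, abs_mul]
                  exact add_le_add le_rfl (mul_le_mul_of_nonneg_left (abs_add_le _ _) (abs_nonneg _))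
              _ = (|c1| + |c2|) * |v ℓ| + |c2| * |v (ℓ + 1)| := by ring
        _ = (|c1| + |c2|) * (∑' ℓ, |v ℓ|) + |c2| * (∑' ℓ, |v (ℓ + 1)|) := by
            rw [Summable.tsum_add ((lp_summable_abs v).mul_left _) ((lp_summable_abs_shift v).mul_left _),
              tsum_mul_left, tsum_mul_left]
        _ ≤ (|c1| + |c2|) * ‖v‖ + |c2| * ‖v‖ := by
            exact add_le_add (mul_le_mul_of_nonneg_left (lp_norm_eq v).ge (by positivity))
              (mul_le_mul_of_nonneg_left (lp_tsum_abs_shift_le v) (abs_nonneg _))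
        _ = (|c1| + 2 * |c2|) * ‖v‖ := by ring)

lemma Lmap_apply (c1 c2 : ℝ) (v : E1) :
    Lmap c1 c2 v = ∑' ℓ, (c1 * v ℓ + c2 * (v ℓ + v (ℓ + 1))) := rfl

/-- the atomistic energy E^a is Fréchet differentiable at 0 on ℓ¹(ℕ),
with derivative ⟨δE^a(0), v⟩ = Σ_ℓ [φ'(1)v_ℓ + φ'(2)(v_ℓ + v_{ℓ+1})]. -/
theorem stmt_17 (φ : ℝ → ℝ) (hφ : ContDiff ℝ 2 φ) (h1 : φ 1 + φ 2 = 0)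
    (Ea : lp (fun _ : ℕ => ℝ) 1 → ℝ)
    (hEa : ∀ u : lp (fun _ : ℕ => ℝ) 1,
      Ea u = ∑' ℓ : ℕ, (φ (1 + u ℓ) + φ (2 + u ℓ + u (ℓ + 1)))) :
    ∃ L : lp (fun _ : ℕ => ℝ) 1 →L[ℝ] ℝ,
      (∀ v : lp (fun _ : ℕ => ℝ) 1,
        L v = ∑' ℓ : ℕ, (deriv φ 1 * v ℓ + deriv φ 2 * (v ℓ + v (ℓ + 1)))) ∧
      HasFDerivAt Ea L 0 := by
  -- continuity of the second derivative
  have hcont : Continuous (deriv (deriv φ)) := by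
    have h2 : ContDiff ℝ ((1:ℕ∞) + 1) φ := by exact_mod_cast hφ
    have h1' := (contDiff_succ_iff_deriv.mp h2).2.2
    have h1'' : ContDiff ℝ ((0:ℕ∞) + 1) (deriv φ) := by exact_mod_cast h1'
    exact ((contDiff_succ_iff_deriv.mp h1'').2.2).continuous
  obtain ⟨C₀, hC₀⟩ := (isCompact_Icc (a := (-1:ℝ)) (b := 5)).exists_bound_of_continuousOn
    hcont.continuousOn
  set C : ℝ := max C₀ 0 with hCdef
  have hCnn : 0 ≤ C := le_max_right _ _
  have hC : ∀ x ∈ Set.Icc (-1:ℝ) 5, |deriv (deriv φ) x| ≤ C := fun x hx =>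
    le_trans (by simpa [Real.norm_eq_abs] using hC₀ x hx) (le_max_left _ _)
  refine ⟨Lmap (deriv φ 1) (deriv φ 2), fun v => Lmap_apply _ _ v, ?_⟩
  -- key quadratic estimate
  have key : ∀ v : E1, ‖v‖ ≤ 1 →
      |Ea v - Lmap (deriv φ 1) (deriv φ 2) v| ≤ 5 * C * ‖v‖ ^ 2 := by
    intro v hv1
    set r1 : ℕ → ℝ := fun ℓ => φ (1 + v ℓ) - φ 1 - deriv φ 1 * v ℓ with hr1def
    set r2 : ℕ → ℝ := fun ℓ =>
      φ (2 + v ℓ + v (ℓ + 1)) - φ 2 - deriv φ 2 * (v ℓ + v (ℓ + 1)) with hr2def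
    have hb1 : ∀ ℓ, |r1 ℓ| ≤ C * (v ℓ) ^ 2 := fun ℓ =>
      taylor_bound φ hφ C hC 1 (v ℓ) le_rfl (by norm_num)
        (le_trans (lp_coord_le v ℓ) (by linarith))
    have hb2 : ∀ ℓ, |r2 ℓ| ≤ C * (v ℓ + v (ℓ + 1)) ^ 2 := by
      intro ℓ
      have ht : |v ℓ + v (ℓ + 1)| ≤ 2 :=
        le_trans (abs_add_le _ _) (by linarith [lp_coord_le v ℓ, lp_coord_le v (ℓ + 1)])
      have := taylor_bound φ hφ C hC 2 (v ℓ + v (ℓ + 1)) (by norm_num) le_rfl ht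
      simpa [hr2def, add_assoc] using this
    -- summability of the squares
    have hq1b : ∀ ℓ, (v ℓ) ^ 2 ≤ ‖v‖ * |v ℓ| := by
      intro ℓ
      rw [sq, ← abs_mul_abs_self]
      exact mul_le_mul_of_nonneg_right (lp_coord_le v ℓ) (abs_nonneg _)
    have hq1 : Summable fun ℓ => (v ℓ) ^ 2 :=
      Summable.of_nonneg_of_le (fun ℓ => sq_nonneg _) hq1b ((lp_summable_abs v).mul_left ‖v‖)
    have ht1 : ∑' ℓ, (v ℓ) ^ 2 ≤ ‖v‖ ^ 2 := by
      calc ∑' ℓ, (v ℓ) ^ 2 ≤ ∑' ℓ, ‖v‖ * |v ℓ| :=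
            Summable.tsum_le_tsum hq1b hq1 ((lp_summable_abs v).mul_left ‖v‖)
        _ = ‖v‖ * ∑' ℓ, |v ℓ| := tsum_mul_left
        _ = ‖v‖ ^ 2 := by rw [← lp_norm_eq]; ring
    have hq2b : ∀ ℓ, (v ℓ + v (ℓ + 1)) ^ 2 ≤ 2 * ‖v‖ * (|v ℓ| + |v (ℓ + 1)|) := by
      intro ℓ
      rw [sq, ← abs_mul_abs_self]
      have h1' : |v ℓ + v (ℓ + 1)| ≤ 2 * ‖v‖ :=
        le_trans (abs_add_le _ _) (by linarith [lp_coord_le v ℓ, lp_coord_le v (ℓ + 1)])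
      have h2' : |v ℓ + v (ℓ + 1)| ≤ |v ℓ| + |v (ℓ + 1)| := abs_add_le _ _
      calc |v ℓ + v (ℓ + 1)| * |v ℓ + v (ℓ + 1)|
          ≤ (2 * ‖v‖) * (|v ℓ| + |v (ℓ + 1)|) :=
            mul_le_mul h1' h2' (abs_nonneg _) (by positivity)
        _ = 2 * ‖v‖ * (|v ℓ| + |v (ℓ + 1)|) := by ring
    have hq2s : Summable fun ℓ => 2 * ‖v‖ * (|v ℓ| + |v (ℓ + 1)|) :=
      ((lp_summable_abs v).add (lp_summable_abs_shift v)).mul_left _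
    have hq2 : Summable fun ℓ => (v ℓ + v (ℓ + 1)) ^ 2 :=
      Summable.of_nonneg_of_le (fun ℓ => sq_nonneg _) hq2b hq2s
    have ht2 : ∑' ℓ, (v ℓ + v (ℓ + 1)) ^ 2 ≤ 4 * ‖v‖ ^ 2 := by
      calc ∑' ℓ, (v ℓ + v (ℓ + 1)) ^ 2 ≤ ∑' ℓ, 2 * ‖v‖ * (|v ℓ| + |v (ℓ + 1)|) :=
            Summable.tsum_le_tsum hq2b hq2 hq2s
        _ = 2 * ‖v‖ * ((∑' ℓ, |v ℓ|) + ∑' ℓ, |v (ℓ + 1)|) := by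
            rw [tsum_mul_left, Summable.tsum_add (lp_summable_abs v) (lp_summable_abs_shift v)]
        _ ≤ 2 * ‖v‖ * (‖v‖ + ‖v‖) := by
            have := lp_tsum_abs_shift_le v
            have h := (lp_norm_eq v).ge
            have : (∑' ℓ, |v ℓ|) + ∑' ℓ, |v (ℓ + 1)| ≤ ‖v‖ + ‖v‖ := add_le_add h this
            exact mul_le_mul_of_nonneg_left this (by positivity)
        _ = 4 * ‖v‖ ^ 2 := by ring
    have hr1abs : Summable fun ℓ => |r1 ℓ| :=
      Summable.of_nonneg_of_le (fun ℓ => abs_nonneg _) hb1 (hq1.mul_left C)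
    have hr2abs : Summable fun ℓ => |r2 ℓ| :=
      Summable.of_nonneg_of_le (fun ℓ => abs_nonneg _) hb2 (hq2.mul_left C)
    have hr1s : Summable r1 := hr1abs.of_abs
    have hr2s : Summable r2 := hr2abs.of_abs
    have hsplit : ∀ ℓ, φ (1 + v ℓ) + φ (2 + v ℓ + v (ℓ + 1)) =
        (deriv φ 1 * v ℓ + deriv φ 2 * (v ℓ + v (ℓ + 1))) + (r1 ℓ + r2 ℓ) := by
      intro ℓ
      simp only [hr1def, hr2def]
      linarith [h1]
    have hEv : Ea v = Lmap (deriv φ 1) (deriv φ 2) v + ((∑' ℓ, r1 ℓ) + ∑' ℓ, r2 ℓ) := by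
      rw [hEa v, Lmap_apply, tsum_congr hsplit,
        Summable.tsum_add (term_summable _ _ v) (hr1s.add hr2s), Summable.tsum_add hr1s hr2s]
    have habs1 : |∑' ℓ, r1 ℓ| ≤ ∑' ℓ, |r1 ℓ| := by
      have h := norm_tsum_le_tsum_norm (f := r1) (by simpa only [Real.norm_eq_abs] using hr1abs)
      simpa only [Real.norm_eq_abs] using h
    have habs2 : |∑' ℓ, r2 ℓ| ≤ ∑' ℓ, |r2 ℓ| := by
      have h := norm_tsum_le_tsum_norm (f := r2) (by simpa only [Real.norm_eq_abs] using hr2abs)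
      simpa only [Real.norm_eq_abs] using h
    have hs1 : ∑' ℓ, |r1 ℓ| ≤ C * ‖v‖ ^ 2 := by
      calc ∑' ℓ, |r1 ℓ| ≤ ∑' ℓ, C * (v ℓ) ^ 2 := Summable.tsum_le_tsum hb1 hr1abs (hq1.mul_left C)
        _ = C * ∑' ℓ, (v ℓ) ^ 2 := tsum_mul_left
        _ ≤ C * ‖v‖ ^ 2 := mul_le_mul_of_nonneg_left ht1 hCnn
    have hs2 : ∑' ℓ, |r2 ℓ| ≤ 4 * C * ‖v‖ ^ 2 := by
      calc ∑' ℓ, |r2 ℓ| ≤ ∑' ℓ, C * (v ℓ + v (ℓ + 1)) ^ 2 :=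
            Summable.tsum_le_tsum hb2 hr2abs (hq2.mul_left C)
        _ = C * ∑' ℓ, (v ℓ + v (ℓ + 1)) ^ 2 := tsum_mul_left
        _ ≤ C * (4 * ‖v‖ ^ 2) := mul_le_mul_of_nonneg_left ht2 hCnn
        _ = 4 * C * ‖v‖ ^ 2 := by ring
    rw [hEv]
    calc |Lmap (deriv φ 1) (deriv φ 2) v + ((∑' ℓ, r1 ℓ) + ∑' ℓ, r2 ℓ) -
          Lmap (deriv φ 1) (deriv φ 2) v| = |(∑' ℓ, r1 ℓ) + ∑' ℓ, r2 ℓ| := by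
            rw [add_sub_cancel_left]
      _ ≤ |∑' ℓ, r1 ℓ| + |∑' ℓ, r2 ℓ| := abs_add_le _ _
      _ ≤ C * ‖v‖ ^ 2 + 4 * C * ‖v‖ ^ 2 := add_le_add (le_trans habs1 hs1) (le_trans habs2 hs2)
      _ = 5 * C * ‖v‖ ^ 2 := by ring
  -- Ea 0 = 0
  have hEa0 : Ea 0 = 0 := by
    rw [hEa]
    have : ∀ ℓ : ℕ, φ (1 + (0 : E1) ℓ) + φ (2 + (0 : E1) ℓ + (0 : E1) (ℓ + 1)) = 0 := by
      intro ℓ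
      simp only [lp.coeFn_zero, Pi.zero_apply, add_zero]
      exact h1
    rw [tsum_congr this, tsum_zero]
  rw [hasFDerivAt_iff_isLittleO_nhds_zero]
  simp only [zero_add, hEa0, sub_zero]
  rw [Asymptotics.isLittleO_iff]
  intro ε hε
  have hδ : 0 < min 1 (ε / (5 * C + 1)) := lt_min one_pos (div_pos hε (by linarith))
  filter_upwards [Metric.ball_mem_nhds (0 : E1) hδ] with v hv
  rw [mem_ball_zero_iff] at hv
  have hv1 : ‖v‖ ≤ 1 := le_of_lt (lt_of_lt_of_le hv (min_le_left _ _))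
  have hv2 : ‖v‖ ≤ ε / (5 * C + 1) := le_of_lt (lt_of_lt_of_le hv (min_le_right _ _))
  have hk := key v hv1
  have h5 : ‖v‖ * (5 * C + 1) ≤ ε := by
    rw [← le_div_iff₀ (by linarith : (0:ℝ) < 5 * C + 1)]
    exact hv2
  rw [Real.norm_eq_abs]
  nlinarith [hk, mul_le_mul_of_nonneg_left h5 (norm_nonneg v), mul_self_nonneg ‖v‖,
    norm_nonneg v]
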